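/- arXiv:2102.10063 — 5 statements merged into one kernel-verified Lean document; each statement's English description precedes it below -/
import Mathlib

section
/- Let S be a finite type, ε ∈ [0,1) a real number, κ : S → PMF S a Markov kernel, F ⊆ S, and d : S → ℕ a function such that: (i) d(s) = 0 if and only if s ∈ F; (ii) κ(s) = PMF.pure s for every s ∈ F; (iii) for every s ∉ F, the total mass that κ(s) assigns to the set {s' : d(s') + 1 = d(s)} is at least 1 − ε; and (iv) for every s and every s' in the support of κ(s), d(s') ≤ d(s) + 1. Then for every initial state s₀ and every natural number k with d(s₀) ≤ k, the k-step distribution μ_k started from PMF.pure s₀ satisfies μ_k(F) ≥ ∑_{i=0}^{⌊(k − d(s₀))/2⌋} (k choose i) · ε^i · (1−ε)^{k−i}. -/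
open scoped ENNReal

/-- The `k`-step distributions of the Markov chain with kernel `κ`
starting from the initial distribution `μ`. -/
noncomputable def kstep {S : Type*} (κ : S → PMF S) (μ : PMF S) : ℕ → PMF S
  | 0 => μ
  | k + 1 => (kstep κ μ k).bind κ

/-! ### Auxiliary binomial bound -/

noncomputable def bbB (ε : ℝ) (k d : ℕ) : ℝ :=
  if d ≤ k then
    ∑ i ∈ Finset.range ((k - d) / 2 + 1), (k.choose i : ℝ) * ε ^ i * (1 - ε) ^ (k - i)
  else 0

lemma bbB_nonneg {ε : ℝ} (hε0 : 0 ≤ ε) (hε1 : ε ≤ 1) (k d : ℕ) : 0 ≤ bbB ε k d := by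
  unfold bbB
  split
  · exact Finset.sum_nonneg fun i _ => mul_nonneg
      (mul_nonneg (Nat.cast_nonneg _) (pow_nonneg hε0 _)) (pow_nonneg (by linarith) _)
  · exact le_refl 0

lemma bbB_le_one {ε : ℝ} (hε0 : 0 ≤ ε) (hε1 : ε ≤ 1) (k d : ℕ) : bbB ε k d ≤ 1 := by
  unfold bbB
  split
  · calc ∑ i ∈ Finset.range ((k - d) / 2 + 1), (k.choose i : ℝ) * ε ^ i * (1 - ε) ^ (k - i)
        ≤ ∑ i ∈ Finset.range (k + 1), (k.choose i : ℝ) * ε ^ i * (1 - ε) ^ (k - i) := by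
          apply Finset.sum_le_sum_of_subset_of_nonneg
          · exact Finset.range_subset_range.2 (by omega)
          · intro i _ _
            exact mul_nonneg (mul_nonneg (Nat.cast_nonneg _) (pow_nonneg hε0 _))
              (pow_nonneg (by linarith) _)
      _ = (ε + (1 - ε)) ^ k := by
          rw [add_pow]
          exact Finset.sum_congr rfl fun i _ => by ring
      _ = 1 := by norm_num
  · norm_num

lemma bbB_antitone {ε : ℝ} (hε0 : 0 ≤ ε) (hε1 : ε ≤ 1) {k d d' : ℕ} (h : d ≤ d') :
    bbB ε k d' ≤ bbB ε k d := by
  unfold bbB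
  split_ifs with h1 h2 h2
  · apply Finset.sum_le_sum_of_subset_of_nonneg
    · exact Finset.range_subset_range.2 (by omega)
    · intro i _ _
      exact mul_nonneg (mul_nonneg (Nat.cast_nonneg _) (pow_nonneg hε0 _))
        (pow_nonneg (by linarith) _)
  · omega
  · exact Finset.sum_nonneg fun i _ => mul_nonneg
      (mul_nonneg (Nat.cast_nonneg _) (pow_nonneg hε0 _)) (pow_nonneg (by linarith) _)
  · exact le_refl 0

lemma bbB_rec {ε : ℝ} (hε0 : 0 ≤ ε) (hε1 : ε ≤ 1) {k d : ℕ} (hd1 : 1 ≤ d) (hd2 : d ≤ k + 1) :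
    bbB ε (k + 1) d ≤ (1 - ε) * bbB ε k (d - 1) + ε * bbB ε k (d + 1) := by
  set f : ℕ → ℕ → ℝ := fun n i => (n.choose i : ℝ) * ε ^ i * (1 - ε) ^ (n - i) with hf
  by_cases hcase : k ≤ d
  · -- d = k or d = k + 1, small cases
    have hm : (k + 1 - d) / 2 = 0 := by omega
    have hm' : (k - (d - 1)) / 2 = 0 := by omega
    have hL : bbB ε (k + 1) d = (1 - ε) ^ (k + 1) := by
      rw [bbB, if_pos hd2, hm]
      simp
    have hR : bbB ε k (d - 1) = (1 - ε) ^ k := by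
      rw [bbB, if_pos (by omega : d - 1 ≤ k), hm']
      simp
    have hnn : 0 ≤ ε * bbB ε k (d + 1) := mul_nonneg hε0 (bbB_nonneg hε0 hε1 _ _)
    rw [hL, hR, pow_succ]
    nlinarith [pow_nonneg (by linarith : (0:ℝ) ≤ 1 - ε) k]
  · -- d + 1 ≤ k
    have hdk : d + 1 ≤ k := by omega
    obtain ⟨n, hn⟩ : ∃ n, (k + 1 - d) / 2 = n + 1 := ⟨(k + 1 - d) / 2 - 1, by omega⟩
    have hm1 : (k - (d - 1)) / 2 = n + 1 := by omega
    have hm2 : (k - (d + 1)) / 2 = n := by omega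
    have hL : bbB ε (k + 1) d = ∑ i ∈ Finset.range (n + 2), f (k + 1) i := by
      rw [bbB, if_pos (by omega), hn]
    have hR1 : bbB ε k (d - 1) = ∑ i ∈ Finset.range (n + 2), f k i := by
      rw [bbB, if_pos (by omega), hm1]
    have hR2 : bbB ε k (d + 1) = ∑ i ∈ Finset.range (n + 1), f k i := by
      rw [bbB, if_pos (by omega), hm2]
    have hnk : n + 1 ≤ k := by omega
    have key : ∀ i ∈ Finset.range (n + 1), f (k + 1) (i + 1) = ε * f k i + (1 - ε) * f k (i + 1) := by
      intro i hi
      simp only [Finset.mem_range] at hi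
      have hik : i + 1 ≤ k := by omega
      have e1 : k + 1 - (i + 1) = k - i := by omega
      have e2 : k - i = (k - (i + 1)) + 1 := by omega
      simp only [hf]
      rw [Nat.choose_succ_succ, e1, e2, pow_succ, pow_succ, Nat.cast_add]
      ring
    have hzero : f (k + 1) 0 = (1 - ε) * f k 0 := by
      simp only [hf, Nat.choose_zero_right, pow_zero, Nat.sub_zero, Nat.cast_one, pow_succ]
      ring
    rw [hL, hR1, hR2]
    calc ∑ i ∈ Finset.range (n + 2), f (k + 1) i
        = ∑ i ∈ Finset.range (n + 1), f (k + 1) (i + 1) + f (k + 1) 0 :=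
          Finset.sum_range_succ' _ _
      _ = ∑ i ∈ Finset.range (n + 1), (ε * f k i + (1 - ε) * f k (i + 1)) + (1 - ε) * f k 0 := by
          rw [Finset.sum_congr rfl key, hzero]
      _ = ε * ∑ i ∈ Finset.range (n + 1), f k i +
            (1 - ε) * (∑ i ∈ Finset.range (n + 1), f k (i + 1) + f k 0) := by
          rw [Finset.sum_add_distrib, ← Finset.mul_sum, ← Finset.mul_sum]
          ring
      _ = ε * ∑ i ∈ Finset.range (n + 1), f k i +
            (1 - ε) * ∑ i ∈ Finset.range (n + 2), f k i := by
          rw [← Finset.sum_range_succ']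
      _ ≤ (1 - ε) * ∑ i ∈ Finset.range (n + 2), f k i +
            ε * ∑ i ∈ Finset.range (n + 1), f k i := by linarith

/-! ### kstep lemmas -/

lemma kstep_fixed {S : Type*} (κ : S → PMF S) (s : S) (h : κ s = PMF.pure s) :
    ∀ n, kstep κ (PMF.pure s) n = PMF.pure s
  | 0 => rfl
  | n + 1 => by
      show (kstep κ (PMF.pure s) n).bind κ = PMF.pure s
      rw [kstep_fixed κ s h n, PMF.pure_bind, h]

lemma kstep_shift {S : Type*} (κ : S → PMF S) (μ : PMF S) :
    ∀ k, kstep κ μ (k + 1) = kstep κ (μ.bind κ) k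
  | 0 => rfl
  | k + 1 => by
      show (kstep κ μ (k + 1)).bind κ = (kstep κ (μ.bind κ) k).bind κ
      rw [kstep_shift κ μ k]

lemma kstep_eq_bind {S : Type*} (κ : S → PMF S) (μ : PMF S) :
    ∀ k, kstep κ μ k = μ.bind (fun s => kstep κ (PMF.pure s) k)
  | 0 => (PMF.bind_pure μ).symm
  | k + 1 => by
      show (kstep κ μ k).bind κ = _
      rw [kstep_eq_bind κ μ k, PMF.bind_bind]
      rfl

/-! ### ENNReal convex combination lemma -/

lemma combo_mono {A B x y : ℝ≥0∞} (hBA : B ≤ A) (hxy : x ≤ y) (hy : y ≤ 1) :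
    x * A + (1 - x) * B ≤ y * A + (1 - y) * B := by
  have h1 : (1 : ℝ≥0∞) - x = (1 - y) + (y - x) := (tsub_add_tsub_cancel hy hxy).symm
  rw [h1, add_mul]
  calc x * A + ((1 - y) * B + (y - x) * B)
      ≤ x * A + ((1 - y) * B + (y - x) * A) := by gcongr
    _ = (x + (y - x)) * A + (1 - y) * B := by ring
    _ = y * A + (1 - y) * B := by rw [add_tsub_cancel_of_le hxy]

theorem stmt_0 {S : Type*} [Fintype S] (ε : ℝ) (hε0 : 0 ≤ ε) (hε1 : ε < 1)
    (κ : S → PMF S) (F : Set S) (d : S → ℕ)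
    (h1 : ∀ s, d s = 0 ↔ s ∈ F)
    (h2 : ∀ s ∈ F, κ s = PMF.pure s)
    (h3 : ∀ s ∉ F, ENNReal.ofReal (1 - ε) ≤ (κ s).toOuterMeasure {s' | d s' + 1 = d s})
    (h4 : ∀ s, ∀ s' ∈ (κ s).support, d s' ≤ d s + 1)
    (s₀ : S) (k : ℕ) (hk : d s₀ ≤ k) :
    ENNReal.ofReal (∑ i ∈ Finset.range ((k - d s₀) / 2 + 1),
        (k.choose i : ℝ) * ε ^ i * (1 - ε) ^ (k - i)) ≤
      (kstep κ (PMF.pure s₀) k).toOuterMeasure F := by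
  have hε1' : ε ≤ 1 := le_of_lt hε1
  have main : ∀ k s, d s ≤ k →
      ENNReal.ofReal (bbB ε k (d s)) ≤ (kstep κ (PMF.pure s) k).toOuterMeasure F := by
    intro k
    induction k with
    | zero =>
      intro s hs
      have hsF : s ∈ F := (h1 s).1 (Nat.le_zero.mp hs)
      have hk0 : kstep κ (PMF.pure s) 0 = PMF.pure s := rfl
      rw [hk0, PMF.toOuterMeasure_pure_apply, if_pos hsF]
      exact le_trans (ENNReal.ofReal_le_one.2 (bbB_le_one hε0 hε1' _ _)) le_rfl
    | succ k ih =>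
      intro s hs
      by_cases hsF : s ∈ F
      · rw [kstep_fixed κ s (h2 s hsF) (k + 1), PMF.toOuterMeasure_pure_apply, if_pos hsF]
        exact ENNReal.ofReal_le_one.2 (bbB_le_one hε0 hε1' _ _)
      · have hd1 : 1 ≤ d s := by
          by_contra h
          exact hsF ((h1 s).1 (by omega))
        -- rewrite the chain by conditioning on the first step
        have hstep : kstep κ (PMF.pure s) (k + 1) =
            (κ s).bind (fun s' => kstep κ (PMF.pure s') k) := by
          rw [kstep_shift, PMF.pure_bind, kstep_eq_bind]
        rw [hstep, PMF.toOuterMeasure_bind_apply]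
        set G : Set S := {s' | d s' + 1 = d s} with hG
        set A : ℝ≥0∞ := ENNReal.ofReal (bbB ε k (d s - 1)) with hA
        set B : ℝ≥0∞ := ENNReal.ofReal (bbB ε k (d s + 1)) with hB
        have hBA : B ≤ A :=
          ENNReal.ofReal_le_ofReal (bbB_antitone hε0 hε1' (by omega))
        set μG : ℝ≥0∞ := (κ s).toOuterMeasure G with hμG
        have hrG : ENNReal.ofReal (1 - ε) ≤ μG := h3 s hsF
        -- μG + μGᶜ = 1
        have hadd : μG + (κ s).toOuterMeasure Gᶜ = 1 := by
          rw [hμG, PMF.toOuterMeasure_apply, PMF.toOuterMeasure_apply, ← ENNReal.tsum_add]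
          rw [show (fun x => G.indicator (κ s) x + Gᶜ.indicator (κ s) x) = κ s by
            funext x
            by_cases hx : x ∈ G <;> simp [Set.indicator, hx]]
          exact (κ s).tsum_coe
        have hμG1 : μG ≤ 1 := le_trans le_self_add hadd.le
        have hμGne : μG ≠ ∞ := ne_top_of_le_ne_top ENNReal.one_ne_top hμG1
        have hcompl : (κ s).toOuterMeasure Gᶜ = 1 - μG := by
          have := hadd
          rw [add_comm] at this
          exact ENNReal.eq_sub_of_add_eq hμGne this
        have hre : ENNReal.ofReal (1 - ε) + ENNReal.ofReal ε = 1 := by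
          rw [← ENNReal.ofReal_add (by linarith) hε0]
          norm_num
        have heps : ENNReal.ofReal ε = 1 - ENNReal.ofReal (1 - ε) := by
          rw [add_comm] at hre
          exact ENNReal.eq_sub_of_add_eq ENNReal.ofReal_ne_top hre
        calc ENNReal.ofReal (bbB ε (k + 1) (d s))
            ≤ ENNReal.ofReal ((1 - ε) * bbB ε k (d s - 1) + ε * bbB ε k (d s + 1)) :=
              ENNReal.ofReal_le_ofReal (bbB_rec hε0 hε1' hd1 hs)
          _ = ENNReal.ofReal (1 - ε) * A + ENNReal.ofReal ε * B := by
              rw [ENNReal.ofReal_add (mul_nonneg (by linarith) (bbB_nonneg hε0 hε1' _ _))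
                  (mul_nonneg hε0 (bbB_nonneg hε0 hε1' _ _)),
                ENNReal.ofReal_mul (by linarith), ENNReal.ofReal_mul hε0]
          _ = ENNReal.ofReal (1 - ε) * A + (1 - ENNReal.ofReal (1 - ε)) * B := by rw [heps]
          _ ≤ μG * A + (1 - μG) * B := combo_mono hBA hrG hμG1
          _ = ∑' s', (κ s) s' * (if s' ∈ G then A else B) := by
              have : ∀ s', (κ s) s' * (if s' ∈ G then A else B) =
                  G.indicator (κ s) s' * A + Gᶜ.indicator (κ s) s' * B := by
                intro s'
                by_cases hx : s' ∈ G <;> simp [Set.indicator, hx]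
              rw [tsum_congr this, ENNReal.tsum_add, ENNReal.tsum_mul_right,
                ENNReal.tsum_mul_right, ← PMF.toOuterMeasure_apply, ← PMF.toOuterMeasure_apply,
                hcompl]
          _ ≤ ∑' s', (κ s) s' * (kstep κ (PMF.pure s') k).toOuterMeasure F := by
              apply ENNReal.tsum_le_tsum
              intro s'
              by_cases hx : s' ∈ G
              · rw [if_pos hx]
                apply mul_le_mul_right
                have hds' : d s' = d s - 1 := by
                  have : d s' + 1 = d s := hx
                  omega
                rw [hA, ← hds']
                exact ih s' (by omega)
              · rw [if_neg hx]
                by_cases hz : (κ s) s' = 0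
                · simp [hz]
                · apply mul_le_mul_right
                  have hsup : s' ∈ (κ s).support := (PMF.mem_support_iff _ _).2 hz
                  have hd4 := h4 s s' hsup
                  by_cases hk' : d s' ≤ k
                  · exact le_trans
                      (ENNReal.ofReal_le_ofReal (bbB_antitone hε0 hε1' hd4)) (ih s' hk')
                  · have hz' : bbB ε k (d s + 1) = 0 := by
                      rw [bbB, if_neg (by omega)]
                    rw [hB, hz']
                    simp
  have hguard : (∑ i ∈ Finset.range ((k - d s₀) / 2 + 1),
      (k.choose i : ℝ) * ε ^ i * (1 - ε) ^ (k - i)) = bbB ε k (d s₀) := by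
    rw [bbB, if_pos hk]
  rw [hguard]
  exact main k s₀ hk
end

section
/- Let (Ω, 𝓕, P) be a probability space with a filtration (𝓕_t)_{t∈ℕ}, and let (X_t)_{t∈ℕ} be an (𝓕_t)-adapted sequence of ℕ-valued random variables such that: (i) X_0 = d almost surely for a fixed d ∈ ℕ; (ii) X_{t+1} ≤ X_t + 1 almost surely for every t; (iii) almost surely on the event {X_t = 0} one has X_{t+1} = 0; and (iv) for every t, almost surely on the event {X_t ≥ 1}, the conditional probability P(X_{t+1} = X_t − 1 | 𝓕_t) is at least 1 − ε, where ε ∈ [0,1). Then for every natural number k with k ≥ d, P(X_k = 0) ≥ ∑_{i=0}^{⌊(k−d)/2⌋} (k choose i) · ε^i · (1−ε)^{k−i}. -/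
open MeasureTheory

private lemma q_rec (ε : ℝ) (t j : ℕ) :
    ∑ i ∈ Finset.range (j + 1), ((t + 1).choose i : ℝ) * ε ^ i * (1 - ε) ^ (t + 1 - i)
      = (1 - ε) * ∑ i ∈ Finset.range (j + 1), (t.choose i : ℝ) * ε ^ i * (1 - ε) ^ (t - i)
        + ε * ∑ i ∈ Finset.range j, (t.choose i : ℝ) * ε ^ i * (1 - ε) ^ (t - i) := by
  induction j with
  | zero => simp [pow_succ]; ring
  | succ j ih =>
    rw [Finset.sum_range_succ, ih, Finset.sum_range_succ
        (f := fun i => (t.choose i : ℝ) * ε ^ i * (1 - ε) ^ (t - i)) (n := j + 1),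
      Finset.sum_range_succ
        (f := fun i => (t.choose i : ℝ) * ε ^ i * (1 - ε) ^ (t - i)) (n := j)]
    have hexp : t + 1 - (j + 1) = t - j := by omega
    have hpascal : (((t + 1).choose (j + 1) : ℕ) : ℝ)
        = (t.choose j : ℝ) + (t.choose (j + 1) : ℝ) := by
      rw [Nat.choose_succ_succ]; push_cast; ring
    rw [hexp, hpascal]
    rcases le_or_gt (j + 1) t with h | h
    · have h2 : t - j = (t - (j + 1)) + 1 := by omega
      rw [h2, pow_succ]
      ring
    · have h1 : t.choose (j + 1) = 0 := Nat.choose_eq_zero_of_lt h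
      rw [h1]
      push_cast
      ring

theorem stmt_1 {Ω : Type*} {m0 : MeasurableSpace Ω} (P : Measure Ω)
    [IsProbabilityMeasure P] (ℱ : Filtration ℕ m0)
    (X : ℕ → Ω → ℕ) (hadapted : Adapted ℱ X)
    (d : ℕ) (ε : ℝ) (hε0 : 0 ≤ ε) (hε1 : ε < 1)
    (hX0 : ∀ᵐ ω ∂P, X 0 ω = d)
    (hinc : ∀ t, ∀ᵐ ω ∂P, X (t + 1) ω ≤ X t ω + 1)
    (habs : ∀ t, ∀ᵐ ω ∂P, X t ω = 0 → X (t + 1) ω = 0)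
    (hdec : ∀ t, ∀ᵐ ω ∂P, 1 ≤ X t ω →
      1 - ε ≤ (P[({ω' | X (t + 1) ω' + 1 = X t ω'}).indicator (fun _ => (1 : ℝ)) | ℱ t]) ω)
    (k : ℕ) (hk : d ≤ k) :
    ENNReal.ofReal (∑ i ∈ Finset.range ((k - d) / 2 + 1),
        (k.choose i : ℝ) * ε ^ i * (1 - ε) ^ (k - i)) ≤
      P {ω | X k ω = 0} := by
  classical
  have hXsm : ∀ t, Measurable[ℱ t] (X t) := fun t => hadapted t
  have hXm : ∀ t, Measurable (X t) := fun t => (hXsm t).mono (ℱ.le t) le_rfl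
  set D : ℕ → Set Ω := fun t => {ω' | X (t + 1) ω' + 1 = X t ω'} with hD
  set S : ℕ → Set Ω := fun t => D t ∪ {ω | X t ω = 0} with hS
  -- measurability of D and S
  have hDℱ : ∀ t, MeasurableSet[ℱ (t + 1)] (D t) := by
    intro t
    exact measurableSet_eq_fun ((hXsm (t + 1)).add_const 1)
      ((hXsm t).mono (ℱ.mono t.le_succ) le_rfl)
  have hDm : ∀ t, MeasurableSet (D t) := fun t => ℱ.le (t + 1) _ (hDℱ t)
  have hSℱ : ∀ t, MeasurableSet[ℱ (t + 1)] (S t) := by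
    intro t
    exact (hDℱ t).union (((hXsm t).mono (ℱ.mono t.le_succ) le_rfl) (measurableSet_singleton 0))
  -- failure count
  set F : ℕ → Ω → ℕ := fun t ω => ∑ s ∈ Finset.range t, if ω ∈ S s then 0 else 1 with hF
  have hFsucc : ∀ t ω, F (t + 1) ω = F t ω + (if ω ∈ S t then 0 else 1) := by
    intro t ω
    exact Finset.sum_range_succ _ _
  have hFm : ∀ t, Measurable[ℱ t] (F t) := by
    intro t
    apply Finset.measurable_sum
    intro s hs
    have hst : s + 1 ≤ t := Finset.mem_range.1 hs
    have : MeasurableSet[ℱ t] (S s) := (ℱ.mono hst) _ (hSℱ s)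
    exact Measurable.ite this measurable_const measurable_const
  have hFsetℱ : ∀ t (A : Set ℕ), MeasurableSet[ℱ t] {ω | F t ω ∈ A} := by
    intro t A
    exact (hFm t) ((Set.to_countable A).measurableSet)
  -- key conditional-probability step
  have hstep : ∀ t (C : Set Ω), MeasurableSet[ℱ t] C →
      (1 - ε) * (P C).toReal ≤ (P (C ∩ S t)).toReal := by
    intro t C hC
    have hCm : MeasurableSet C := ℱ.le t _ hC
    set C0 : Set Ω := C ∩ {ω | X t ω = 0} with hC0
    set C1 : Set Ω := C ∩ {ω | 1 ≤ X t ω} with hC1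
    have hC1ℱ : MeasurableSet[ℱ t] C1 :=
      hC.inter ((hXsm t) ((Set.to_countable {n : ℕ | 1 ≤ n}).measurableSet))
    have hC1m : MeasurableSet C1 := ℱ.le t _ hC1ℱ
    have hC0m : MeasurableSet C0 := hCm.inter ((hXm t) (measurableSet_singleton 0))
    have hint : Integrable ((D t).indicator fun _ => (1 : ℝ)) P :=
      (integrable_const 1).indicator (hDm t)
    have h1 : (1 - ε) * (P C1).toReal ≤ (P (C1 ∩ D t)).toReal := by
      have e1 : ∫ ω in C1, ((D t).indicator fun _ => (1 : ℝ)) ω ∂P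
          = (P (C1 ∩ D t)).toReal := by
        rw [setIntegral_indicator (hDm t), setIntegral_const]
        simp; rfl
      have e2 : ∫ ω in C1, (P[(D t).indicator fun _ => (1 : ℝ) | ℱ t]) ω ∂P
          = ∫ ω in C1, ((D t).indicator fun _ => (1 : ℝ)) ω ∂P :=
        setIntegral_condExp (ℱ.le t) hint hC1ℱ
      have e3 : ∫ _ω in C1, (1 - ε) ∂P = (P C1).toReal * (1 - ε) := by
        rw [setIntegral_const]; simp [smul_eq_mul]; left; rfl
      have hmono : ∫ _ω in C1, (1 - ε) ∂P
          ≤ ∫ ω in C1, (P[(D t).indicator fun _ => (1 : ℝ) | ℱ t]) ω ∂P := by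
        refine setIntegral_mono_ae_restrict (integrable_const _).integrableOn
          integrable_condExp.integrableOn ?_
        rw [Filter.EventuallyLE, ae_restrict_iff' hC1m]
        filter_upwards [hdec t] with ω hω hωC1
        exact hω hωC1.2
      calc (1 - ε) * (P C1).toReal = ∫ _ω in C1, (1 - ε) ∂P := by rw [e3]; ring
        _ ≤ _ := hmono
        _ = (P (C1 ∩ D t)).toReal := by rw [e2, e1]
    have hdisj : Disjoint C0 (C1 ∩ D t) := by
      refine Set.disjoint_left.2 ?_
      rintro ω ⟨_, h0⟩ ⟨⟨_, h1'⟩, _⟩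
      simp only [Set.mem_setOf_eq] at h0 h1'
      omega
    have hsub : C0 ∪ (C1 ∩ D t) ⊆ C ∩ S t := by
      rintro ω (⟨hωC, h0⟩ | ⟨⟨hωC, _⟩, hωD⟩)
      · exact ⟨hωC, Or.inr h0⟩
      · exact ⟨hωC, Or.inl hωD⟩
    have h2 : (P C0).toReal + (P (C1 ∩ D t)).toReal ≤ (P (C ∩ S t)).toReal := by
      have hU := measure_union (μ := P) hdisj (hC1m.inter (hDm t))
      have hmono2 : P (C0 ∪ (C1 ∩ D t)) ≤ P (C ∩ S t) := measure_mono hsub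
      have hne : P (C ∩ S t) ≠ ⊤ := measure_ne_top _ _
      calc (P C0).toReal + (P (C1 ∩ D t)).toReal
          = (P (C0 ∪ (C1 ∩ D t))).toReal := by
            rw [hU, ENNReal.toReal_add (measure_ne_top _ _) (measure_ne_top _ _)]
        _ ≤ (P (C ∩ S t)).toReal := ENNReal.toReal_mono hne hmono2
    have hsplit : (P C).toReal = (P C0).toReal + (P C1).toReal := by
      have hU : C = C0 ∪ C1 := by
        ext ω
        simp only [hC0, hC1, Set.mem_union, Set.mem_inter_iff, Set.mem_setOf_eq]
        constructor
        · intro h; rcases Nat.eq_zero_or_pos (X t ω) with h0 | h0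
          · exact Or.inl ⟨h, h0⟩
          · exact Or.inr ⟨h, h0⟩
        · rintro (⟨h, _⟩ | ⟨h, _⟩) <;> exact h
      have hdisj2 : Disjoint C0 C1 := by
        refine Set.disjoint_left.2 ?_
        rintro ω ⟨_, h0⟩ ⟨_, h1'⟩
        simp only [Set.mem_setOf_eq] at h0 h1'
        omega
      rw [hU, measure_union hdisj2 hC1m,
        ENNReal.toReal_add (measure_ne_top _ _) (measure_ne_top _ _)]
    have hp0 : (0 : ℝ) ≤ (P C0).toReal := ENNReal.toReal_nonneg
    nlinarith [h1, h2, hsplit]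
  -- main induction
  have hmain : ∀ t (j : ℕ),
      (∑ i ∈ Finset.range (j + 1), (t.choose i : ℝ) * ε ^ i * (1 - ε) ^ (t - i))
        ≤ (P {ω | F t ω ≤ j}).toReal := by
    intro t
    induction t with
    | zero =>
      intro j
      have hU : {ω | F 0 ω ≤ j} = Set.univ := by
        ext ω; simp [hF]
      rw [hU]
      have hsum : (∑ i ∈ Finset.range (j + 1),
          ((Nat.choose 0 i : ℕ) : ℝ) * ε ^ i * (1 - ε) ^ (0 - i)) = 1 := by
        rw [Finset.sum_eq_single_of_mem 0 (Finset.mem_range.2 (Nat.succ_pos j))]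
        · simp
        · intro i _ hi
          have : Nat.choose 0 i = 0 := Nat.choose_eq_zero_of_lt (Nat.pos_of_ne_zero hi)
          simp [this]
      rw [hsum]
      simp
    | succ t ih =>
      intro j
      set B1 : Set Ω := {ω | F t ω + 1 ≤ j} with hB1
      set C : Set Ω := {ω | F t ω ≤ j} with hC
      have hB1ℱ : MeasurableSet[ℱ t] B1 := hFsetℱ t {n | n + 1 ≤ j}
      have hCℱ : MeasurableSet[ℱ t] C := hFsetℱ t {n | n ≤ j}
      have hB1m : MeasurableSet B1 := ℱ.le t _ hB1ℱ
      have hCm : MeasurableSet C := ℱ.le t _ hCℱ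
      set B2 : Set Ω := (C \ B1) ∩ S t with hB2
      have hB2m : MeasurableSet B2 :=
        (hCm.diff hB1m).inter (ℱ.le (t + 1) _ (hSℱ t))
      have hB1C : B1 ⊆ C := by intro ω h; simp only [hB1, Set.mem_setOf_eq] at h; exact Nat.le_of_succ_le h
      have hsub : B1 ∪ B2 ⊆ {ω | F (t + 1) ω ≤ j} := by
        rintro ω (h | ⟨⟨hωC, _⟩, hωS⟩)
        · simp only [Set.mem_setOf_eq, hFsucc]
          have : (if ω ∈ S t then 0 else 1) ≤ 1 := by split <;> omega
          simp only [hB1, Set.mem_setOf_eq] at h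
          omega
        · simp only [Set.mem_setOf_eq, hFsucc, if_pos hωS]
          exact hωC
      have hdisj : Disjoint B1 B2 := by
        refine Set.disjoint_left.2 ?_
        rintro ω h1' ⟨⟨_, h2'⟩, _⟩
        exact h2' h1'
      -- measure inequalities
      have hadd : (P B1).toReal + (P B2).toReal ≤ (P {ω | F (t + 1) ω ≤ j}).toReal := by
        have hmeas : MeasurableSet {ω | F (t + 1) ω ≤ j} :=
          ℱ.le (t + 1) _ (hFsetℱ (t + 1) {n | n ≤ j})
        calc (P B1).toReal + (P B2).toReal = (P (B1 ∪ B2)).toReal := by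
              rw [measure_union hdisj hB2m,
                ENNReal.toReal_add (measure_ne_top _ _) (measure_ne_top _ _)]
          _ ≤ _ := ENNReal.toReal_mono (measure_ne_top _ _) (measure_mono hsub)
      have hstep' : (1 - ε) * (P (C \ B1)).toReal ≤ (P B2).toReal :=
        hstep t (C \ B1) (hCℱ.diff hB1ℱ)
      have hCsub : (P C).toReal ≤ (P (C \ B1)).toReal + (P B1).toReal := by
        have : C ⊆ (C \ B1) ∪ B1 := by
          intro ω h
          by_cases hω : ω ∈ B1
          · exact Or.inr hω
          · exact Or.inl ⟨h, hω⟩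
        calc (P C).toReal ≤ (P ((C \ B1) ∪ B1)).toReal :=
              ENNReal.toReal_mono (measure_ne_top _ _) (measure_mono this)
          _ ≤ (P (C \ B1)).toReal + (P B1).toReal := by
              refine ENNReal.toReal_le_add (measure_union_le _ _) ?_ ?_ <;>
                exact measure_ne_top _ _
      have hihC : (∑ i ∈ Finset.range (j + 1), (t.choose i : ℝ) * ε ^ i * (1 - ε) ^ (t - i))
          ≤ (P C).toReal := ih j
      have hihB1 : (∑ i ∈ Finset.range j, (t.choose i : ℝ) * ε ^ i * (1 - ε) ^ (t - i))
          ≤ (P B1).toReal := by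
        cases j with
        | zero => simp
        | succ j' =>
          have hBeq : B1 = {ω | F t ω ≤ j'} := by
            ext ω; simp only [hB1, Set.mem_setOf_eq]; omega
          rw [hBeq]
          exact ih j'
      rw [q_rec]
      have h1ε : (0 : ℝ) ≤ 1 - ε := by linarith
      nlinarith [hadd, hstep', hCsub, hihC, hihB1]
  -- conclusion
  set m : ℕ := (k - d) / 2 with hm
  have h1 := hmain k m
  have hae : ∀ᵐ ω ∂P, ω ∈ {ω | F k ω ≤ m} → ω ∈ {ω | X k ω = 0} := by
    have hi : ∀ᵐ ω ∂P, ∀ t, X (t + 1) ω ≤ X t ω + 1 := ae_all_iff.2 hinc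
    have ha : ∀ᵐ ω ∂P, ∀ t, X t ω = 0 → X (t + 1) ω = 0 := ae_all_iff.2 habs
    filter_upwards [hX0, hi, ha] with ω h0 hI hA hFk
    have hFk' : F k ω ≤ m := hFk
    show X k ω = 0
    have claim : ∀ t, X t ω = 0 ∨ X t ω + t ≤ d + 2 * F t ω := by
      intro t
      induction t with
      | zero => right; simp [hF, h0]
      | succ t iht =>
        rcases iht with h | h
        · left; exact hA t h
        · by_cases hs : ω ∈ S t
          · have hs' : ω ∈ D t ∨ ω ∈ {ω | X t ω = 0} := hs
            rcases hs' with hd | h00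
            · right
              rw [hFsucc t ω, if_pos hs]
              simp only [hD, Set.mem_setOf_eq] at hd
              omega
            · left
              simp only [Set.mem_setOf_eq] at h00
              exact hA t h00
          · right
            have hI' := hI t
            rw [hFsucc t ω, if_neg hs]
            omega
    rcases claim k with h | h
    · exact h
    · have h2m : m * 2 ≤ k - d := Nat.div_mul_le_self _ _
      omega
  have hle : P {ω | F k ω ≤ m} ≤ P {ω | X k ω = 0} := measure_mono_ae hae
  refine ENNReal.ofReal_le_of_le_toReal ?_
  calc (∑ i ∈ Finset.range ((k - d) / 2 + 1), (k.choose i : ℝ) * ε ^ i * (1 - ε) ^ (k - i))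
      ≤ (P {ω | F k ω ≤ m}).toReal := h1
    _ ≤ (P {ω | X k ω = 0}).toReal := ENNReal.toReal_mono (measure_ne_top _ _) hle
end

section
/- Let (Ω, 𝓕, P) be a probability space with a filtration (𝓕_t)_{t=0,…,k}, let ε ∈ [0,1), and let Y_1, …, Y_k be {0,1}-valued random variables such that Y_t is 𝓕_t-measurable and, for every t ∈ {1,…,k}, the conditional probability P(Y_t = 1 | 𝓕_{t−1}) ≥ 1 − ε almost surely. Then for every natural number m ≤ k, the probability that at most m of the Y_t equal 0 satisfies P(∑_{t=1}^k (1 − Y_t) ≤ m) ≥ ∑_{i=0}^{m} (k choose i) · ε^i · (1−ε)^{k−i}. -/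
open MeasureTheory

noncomputable def Fb (ε : ℝ) (t j : ℕ) : ℝ :=
  ∑ i ∈ Finset.range (j + 1), (t.choose i : ℝ) * ε ^ i * (1 - ε) ^ (t - i)

lemma Fb_zero (ε : ℝ) (j : ℕ) : Fb ε 0 j = 1 := by
  induction j with
  | zero => simp [Fb]
  | succ n ih =>
    rw [Fb, Finset.sum_range_succ, ← Fb, ih]
    simp

lemma Fb_zero' (ε : ℝ) (t : ℕ) : Fb ε t 0 = (1 - ε) ^ t := by
  simp [Fb]

lemma Fb_succ (ε : ℝ) (t j : ℕ) :
    Fb ε t (j+1) = Fb ε t j + (t.choose (j+1) : ℝ) * ε^(j+1) * (1-ε)^(t-(j+1)) := by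
  rw [Fb, Finset.sum_range_succ]; rfl

lemma Fb_rec (ε : ℝ) (t j : ℕ) :
    Fb ε (t+1) (j+1) = ε * Fb ε t j + (1-ε) * Fb ε t (j+1) := by
  induction j with
  | zero =>
    rcases t with _ | t
    · simp [Fb, Finset.sum_range_succ]
    · simp only [Fb_succ, Fb_zero']
      simp [Nat.succ_sub_succ, pow_succ]
      ring
  | succ n ih =>
    rw [Fb_succ ε (t+1) (n+1), ih, Fb_succ ε t (n+1), Fb_succ ε t n]
    have h1 : (t+1) - (n+2) = t - (n+1) := by omega
    have h2 : ((t+1).choose (n+2) : ℝ) = t.choose (n+1) + t.choose (n+2) := by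
      rw [Nat.choose_succ_succ]; push_cast; ring
    rw [h1, h2]
    rcases le_or_gt (n+2) t with h | h
    · have h3 : t - (n+1) = (t - (n+2)) + 1 := by omega
      rw [h3, pow_succ]
      ring
    · have h4 : t.choose (n+2) = 0 := Nat.choose_eq_zero_of_lt h
      rw [h4]
      push_cast
      ring

lemma key {Ω : Type*} {m0 : MeasurableSpace Ω} (P : Measure Ω) [IsProbabilityMeasure P]
    (ℱ : Filtration ℕ m0) (u : ℕ) (ε : ℝ)
    (s : Set Ω) (hs : MeasurableSet s)
    (hcond : ∀ᵐ ω ∂P, 1 - ε ≤ (P[s.indicator (fun _ => (1:ℝ)) | ℱ u]) ω)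
    (A : Set Ω) (hA : MeasurableSet[ℱ u] A) :
    (1 - ε) * (P A).toReal ≤ (P (A ∩ s)).toReal := by
  have hint : Integrable (s.indicator (fun _ => (1:ℝ))) P :=
    (integrable_const 1).indicator hs
  have h1 : ∫ ω in A, (P[s.indicator (fun _ => (1:ℝ)) | ℱ u]) ω ∂P
      = ∫ ω in A, s.indicator (fun _ => (1:ℝ)) ω ∂P :=
    setIntegral_condExp (ℱ.le u) hint hA
  have h2 : ∫ ω in A, s.indicator (fun _ => (1:ℝ)) ω ∂P = (P (A ∩ s)).toReal := by
    rw [setIntegral_indicator hs, setIntegral_const, smul_eq_mul, mul_one]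
    rfl
  have h3 : (1-ε) * (P A).toReal ≤ ∫ ω in A, (P[s.indicator (fun _ => (1:ℝ)) | ℱ u]) ω ∂P := by
    have hb : ∫ ω in A, (1 - ε) ∂P = (1-ε) * (P A).toReal := by
      rw [setIntegral_const, smul_eq_mul, mul_comm]
      rfl
    rw [← hb]
    exact setIntegral_mono_ae (integrableOn_const (measure_lt_top P A).ne)
      integrable_condExp.integrableOn hcond
  calc (1-ε) * (P A).toReal ≤ _ := h3
    _ = (P (A ∩ s)).toReal := by rw [h1, h2]

theorem stmt_2 {Ω : Type*} {m0 : MeasurableSpace Ω} (P : Measure Ω)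
    [IsProbabilityMeasure P] (ℱ : Filtration ℕ m0)
    (k : ℕ) (ε : ℝ) (hε0 : 0 ≤ ε) (hε1 : ε < 1)
    (Y : ℕ → Ω → ℕ)
    (hY01 : ∀ t ∈ Finset.Icc 1 k, ∀ ω, Y t ω ≤ 1)
    (hmeas : ∀ t ∈ Finset.Icc 1 k, Measurable[ℱ t] (Y t))
    (hcond : ∀ t ∈ Finset.Icc 1 k, ∀ᵐ ω ∂P,
      1 - ε ≤ (P[({ω' | Y t ω' = 1}).indicator (fun _ => (1 : ℝ)) | ℱ (t - 1)]) ω)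
    (m : ℕ) (hm : m ≤ k) :
    ENNReal.ofReal (∑ i ∈ Finset.range (m + 1),
        (k.choose i : ℝ) * ε ^ i * (1 - ε) ^ (k - i)) ≤
      P {ω | ∑ t ∈ Finset.Icc 1 k, (1 - Y t ω) ≤ m} := by
  have hε1' : (0:ℝ) ≤ 1 - ε := by linarith
  have main : ∀ t, t ≤ k → ∀ j,
      Fb ε t j ≤ (P {ω | ∑ s ∈ Finset.Icc 1 t, (1 - Y s ω) ≤ j}).toReal := by
    intro t
    induction t with
    | zero =>
      intro _ j
      have huniv : {ω : Ω | ∑ s ∈ Finset.Icc 1 0, (1 - Y s ω) ≤ j} = Set.univ := by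
        ext ω; simp
      rw [huniv, Fb_zero]
      simp
    | succ t ih =>
      intro htk j
      have htk' : t ≤ k := Nat.le_of_succ_le htk
      have hmem : t + 1 ∈ Finset.Icc 1 k := Finset.mem_Icc.mpr ⟨Nat.succ_le_succ (Nat.zero_le t), htk⟩
      -- measurability of partial sums
      have hSmeas : Measurable[ℱ t] (fun ω => ∑ s ∈ Finset.Icc 1 t, (1 - Y s ω)) := by
        apply Finset.measurable_sum
        intro s hs
        have hs' : s ∈ Finset.Icc 1 k := by
          simp only [Finset.mem_Icc] at hs ⊢; omega
        have hst : s ≤ t := (Finset.mem_Icc.mp hs).2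
        exact Measurable.const_sub ((hmeas s hs').mono (ℱ.mono hst) le_rfl) 1
      have hA : ∀ j', MeasurableSet[ℱ t] {ω | ∑ s ∈ Finset.Icc 1 t, (1 - Y s ω) ≤ j'} := by
        intro j'
        exact hSmeas (show MeasurableSet (Set.Iic j') from trivial)
      -- the success event
      set sY : Set Ω := {ω' | Y (t+1) ω' = 1} with hsYdef
      have hsY : MeasurableSet sY := by
        have : MeasurableSet[ℱ (t+1)] sY :=
          (hmeas (t+1) hmem) (show MeasurableSet ({1} : Set ℕ) from trivial)
        exact ℱ.le (t+1) _ this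
      have hcond' : ∀ᵐ ω ∂P, 1 - ε ≤ (P[sY.indicator (fun _ => (1:ℝ)) | ℱ t]) ω := by
        have := hcond (t+1) hmem
        simpa using this
      have hkey := fun (A : Set Ω) (hA' : MeasurableSet[ℱ t] A) =>
        key P ℱ t ε sY hsY hcond' A hA'
      -- sum splitting
      have hsplit : ∀ ω, ∑ s ∈ Finset.Icc 1 (t+1), (1 - Y s ω)
          = (∑ s ∈ Finset.Icc 1 t, (1 - Y s ω)) + (1 - Y (t+1) ω) := by
        intro ω
        exact Finset.sum_Icc_succ_top (Nat.succ_le_succ (Nat.zero_le t)) _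
      rcases j with _ | j
      · -- j = 0
        set A0 := {ω | ∑ s ∈ Finset.Icc 1 t, (1 - Y s ω) ≤ 0} with hA0def
        have hsub : A0 ∩ sY ⊆ {ω | ∑ s ∈ Finset.Icc 1 (t+1), (1 - Y s ω) ≤ 0} := by
          intro ω ⟨h1, h2⟩
          simp only [Set.mem_setOf_eq] at *
          rw [hsplit, h2, Nat.sub_self, Nat.add_zero]
          exact h1
        calc Fb ε (t+1) 0 = (1-ε) * Fb ε t 0 := by
              rw [Fb_zero', Fb_zero', pow_succ]; ring
          _ ≤ (1-ε) * (P A0).toReal := by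
              exact mul_le_mul_of_nonneg_left (ih htk' 0) hε1'
          _ ≤ (P (A0 ∩ sY)).toReal := hkey A0 (hA 0)
          _ ≤ (P {ω | ∑ s ∈ Finset.Icc 1 (t+1), (1 - Y s ω) ≤ 0}).toReal := by
              exact ENNReal.toReal_mono (measure_ne_top P _) (measure_mono hsub)
      · -- j+1
        set C := {ω | ∑ s ∈ Finset.Icc 1 t, (1 - Y s ω) ≤ j} with hCdef
        set B := {ω | ∑ s ∈ Finset.Icc 1 t, (1 - Y s ω) ≤ j + 1} with hBdef
        set D := (B \ C) ∩ sY with hDdef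
        have hCB : C ⊆ B := fun ω h => Nat.le_succ_of_le h
        have hDm0 : MeasurableSet D :=
          (ℱ.le t _ ((hA (j+1)).diff (hA j))).inter hsY
        have hdisj : Disjoint C D :=
          (disjoint_sdiff_self_right).mono_right Set.inter_subset_left
        have hsub : C ∪ D ⊆ {ω | ∑ s ∈ Finset.Icc 1 (t+1), (1 - Y s ω) ≤ j + 1} := by
          intro ω hω
          simp only [Set.mem_setOf_eq]
          rw [hsplit]
          rcases hω with hω | hω
          · have h1 : 1 - Y (t+1) ω ≤ 1 := Nat.sub_le 1 _
            have h2 : ∑ s ∈ Finset.Icc 1 t, (1 - Y s ω) ≤ j := hω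
            omega
          · obtain ⟨⟨hωB, _⟩, hωs⟩ := hω
            have : Y (t+1) ω = 1 := hωs
            rw [this, Nat.sub_self, Nat.add_zero]
            exact hωB
        have hdiff : (P (B \ C)).toReal = (P B).toReal - (P C).toReal := by
          rw [measure_diff hCB (ℱ.le t _ (hA j)).nullMeasurableSet (measure_ne_top P C)]
          exact ENNReal.toReal_sub_of_le (measure_mono hCB) (measure_ne_top P B)
        have hD : (1-ε) * ((P B).toReal - (P C).toReal) ≤ (P D).toReal := by
          rw [← hdiff]
          exact hkey (B \ C) ((hA (j+1)).diff (hA j))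
        have hunion : (P C).toReal + (P D).toReal
            ≤ (P {ω | ∑ s ∈ Finset.Icc 1 (t+1), (1 - Y s ω) ≤ j + 1}).toReal := by
          have h1 : P (C ∪ D) ≤ P {ω | ∑ s ∈ Finset.Icc 1 (t+1), (1 - Y s ω) ≤ j + 1} :=
            measure_mono hsub
          rw [measure_union hdisj hDm0] at h1
          have h2 := ENNReal.toReal_mono (measure_ne_top P _) h1
          rwa [ENNReal.toReal_add (measure_ne_top P C) (measure_ne_top P D)] at h2
        have hCmono : (P C).toReal ≤ (P B).toReal :=
          ENNReal.toReal_mono (measure_ne_top P B) (measure_mono hCB)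
        have hic : Fb ε t j ≤ (P C).toReal := ih htk' j
        have hib : Fb ε t (j+1) ≤ (P B).toReal := ih htk' (j+1)
        rw [Fb_rec]
        nlinarith [hkey (B \ C) ((hA (j+1)).diff (hA j))]
  have hmain := main k le_rfl m
  refine ENNReal.ofReal_le_of_le_toReal ?_
  calc (∑ i ∈ Finset.range (m + 1), (k.choose i : ℝ) * ε ^ i * (1 - ε) ^ (k - i))
      = Fb ε k m := rfl
    _ ≤ _ := hmain
end

section
/- Let k, d ∈ ℕ and let x : ℕ → ℕ be a sequence with x(0) = d such that for every t < k, x(t+1) ≤ x(t) + 1. Suppose the number of 'unintended' steps, i.e., the cardinality i of the set {t : t < k and x(t+1) + 1 ≠ x(t)}, satisfies d + 2·i ≤ k (equivalently i ≤ ⌊(k−d)/2⌋ and k ≥ d). Then x(k) = 0. -/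
theorem stmt_4 (k d : ℕ) (x : ℕ → ℕ) (hx0 : x 0 = d)
    (hstep : ∀ t < k, x (t + 1) ≤ x t + 1)
    (hbad : d + 2 * ((Finset.range k).filter (fun t => x (t + 1) + 1 ≠ x t)).card ≤ k) :
    x k = 0 := by
  set P : ℕ → Prop := fun t => x (t + 1) + 1 ≠ x t with hP
  have key : ∀ t ≤ k,
      x t + ((Finset.range t).filter (fun s => ¬ P s)).card
        ≤ d + ((Finset.range t).filter P).card := by
    intro t ht
    induction t with
    | zero => simp [hx0]
    | succ n ih =>
      have hn : n ≤ k := Nat.le_of_succ_le ht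
      have ihn := ih hn
      have hstepn := hstep n (Nat.lt_of_succ_le ht)
      rw [Finset.range_add_one, Finset.filter_insert, Finset.filter_insert]
      by_cases hpn : P n
      · rw [if_pos hpn, if_neg (by exact fun h => h hpn)]
        rw [Finset.card_insert_of_notMem (by simp)]
        omega
      · rw [if_neg hpn, if_pos hpn]
        rw [Finset.card_insert_of_notMem (by simp)]
        have : x (n + 1) + 1 = x n := by
          by_contra h; exact hpn h
        omega
  have hk := key k le_rfl
  have hsum := Finset.card_filter_add_card_filter_not
    (s := Finset.range k) (p := P)
  rw [Finset.card_range] at hsum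
  have hbad2 : d + 2 * ((Finset.range k).filter P).card ≤ k := hbad
  omega
end

section
/- Let S be a finite type, κ : S → PMF S a Markov kernel, F ⊆ S, and d : S → ℕ a function such that: (i) d(s) = 0 if and only if s ∈ F; (ii) κ(s) = PMF.pure s for every s ∈ F; and (iii) for every s ∉ F, the total mass that κ(s) assigns to the set {s' : d(s') + 1 = d(s)} equals 1. Then for every initial state s₀ and every natural number k with d(s₀) ≤ k, the k-step distribution μ_k started from PMF.pure s₀ satisfies μ_k(F) = 1. -/
open scoped ENNReal

lemma kstep_support {S : Type*} (κ : S → PMF S) (F : Set S) (d : S → ℕ)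
    (h1 : ∀ s, d s = 0 ↔ s ∈ F)
    (h2 : ∀ s ∈ F, κ s = PMF.pure s)
    (h3 : ∀ s ∉ F, (κ s).toOuterMeasure {s' | d s' + 1 = d s} = 1) :
    ∀ (k : ℕ) (μ : PMF S) (n : ℕ), μ.support ⊆ {s | d s ≤ n + k} →
      (kstep κ μ k).support ⊆ {s | d s ≤ n} := by
  intro k
  induction k with
  | zero => intro μ n h; simpa [kstep] using h
  | succ k ih =>
    intro μ n h
    have hsub : (kstep κ μ k).support ⊆ {s | d s ≤ (n + 1)} := by
      apply ih μ (n + 1)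
      intro s hs
      have := h hs
      simp only [Set.mem_setOf_eq] at this ⊢
      omega
    show ((kstep κ μ k).bind κ).support ⊆ _
    intro s' hmem
    rw [PMF.support_bind, Set.mem_iUnion₂] at hmem
    obtain ⟨s, hs, hs'⟩ := hmem
    have hds : d s ≤ n + 1 := hsub hs
    by_cases hF : s ∈ F
    · have : κ s = PMF.pure s := h2 s hF
      rw [this, PMF.support_pure] at hs'
      subst hs'
      have : d s' = 0 := (h1 s').2 hF
      simp [this]
    · have h3' := h3 s hF
      rw [PMF.toOuterMeasure_apply_eq_one_iff] at h3'
      have : d s' + 1 = d s := h3' hs'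
      simp only [Set.mem_setOf_eq]
      omega

theorem stmt_7 {S : Type*} [Fintype S]
    (κ : S → PMF S) (F : Set S) (d : S → ℕ)
    (h1 : ∀ s, d s = 0 ↔ s ∈ F)
    (h2 : ∀ s ∈ F, κ s = PMF.pure s)
    (h3 : ∀ s ∉ F, (κ s).toOuterMeasure {s' | d s' + 1 = d s} = 1)
    (s₀ : S) (k : ℕ) (hk : d s₀ ≤ k) :
    (kstep κ (PMF.pure s₀) k).toOuterMeasure F = 1 := by
  rw [PMF.toOuterMeasure_apply_eq_one_iff]
  have h := kstep_support κ F d h1 h2 h3 k (PMF.pure s₀) 0 (by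
    intro s hs
    rw [PMF.support_pure] at hs
    subst hs
    simpa using hk)
  intro s hs
  exact (h1 s).1 (Nat.le_zero.mp (h hs))
end
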